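/- arXiv:1501.00924 — 3 statements merged into one kernel-verified Lean document; each statement's English description precedes it below -/
import Mathlib

section
/- There exists a constant C depending only on β⁻ and β⁺ (independent of d, e and h) such that for all 0 < h < 1, every interface configuration on K = [0,h]² of Type I (d, e ∈ [0,1], (d,e) ≠ (0,0)) or Type II (d, e ∈ [0,1]), every bilinear IFE function v on K, and every edge B of K with unit normal n_B: ∥β ∇v · n_B∥_{L²(B)} ≤ C h^{1/2} |K|^{-1/2} ∥√β ∇v∥_{L²(K)}. -/
set_option maxHeartbeats 1600000
set_option linter.unusedVariables false


open MeasureTheory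

/-- The closed square `K = [0,h] × [0,h]`. -/
def sqK (h : ℝ) : Set (ℝ × ℝ) := Set.Icc (0:ℝ) h ×ˢ Set.Icc (0:ℝ) h

/-- `n` is a unit normal to the segment from `D` to `E`. -/
def unitNormalTo (n D E : ℝ × ℝ) : Prop :=
  n.1 ^ 2 + n.2 ^ 2 = 1 ∧ n.1 * (E.1 - D.1) + n.2 * (E.2 - D.2) = 0

/-- Jump conditions for bilinear IFE functions with pieces
`v⁻ = c₁⁻ + c₂⁻x + c₃⁻y + c₄xy`, `v⁺ = c₁⁺ + c₂⁺x + c₃⁺y + c₄xy`: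
`v⁻(D) = v⁺(D)`, `v⁻(E) = v⁺(E)`, and `∫_{DE} β⁻∇v⁻·n̄ ds = ∫_{DE} β⁺∇v⁺·n̄ ds`,
the segment `DE` being parametrized by `t ↦ D + t(E-D)`, `t ∈ [0,1]`, with arclength
element `ds = ‖E-D‖ dt`. -/
noncomputable def bilJump (βm βp c1m c2m c3m c1p c2p c3p c4 : ℝ) (D E n : ℝ × ℝ) : Prop :=
  c1m + c2m * D.1 + c3m * D.2 + c4 * D.1 * D.2
      = c1p + c2p * D.1 + c3p * D.2 + c4 * D.1 * D.2 ∧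
  c1m + c2m * E.1 + c3m * E.2 + c4 * E.1 * E.2
      = c1p + c2p * E.1 + c3p * E.2 + c4 * E.1 * E.2 ∧
  Real.sqrt ((E.1 - D.1) ^ 2 + (E.2 - D.2) ^ 2) *
      (∫ t in (0:ℝ)..1, βm * ((c2m + c4 * (D.2 + t * (E.2 - D.2))) * n.1 +
        (c3m + c4 * (D.1 + t * (E.1 - D.1))) * n.2))
    = Real.sqrt ((E.1 - D.1) ^ 2 + (E.2 - D.2) ^ 2) *
      (∫ t in (0:ℝ)..1, βp * ((c2p + c4 * (D.2 + t * (E.2 - D.2))) * n.1 +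
        (c3p + c4 * (D.1 + t * (E.1 - D.1))) * n.2))

/-- `∥√β ∇v∥²_{L²(K)} = β⁻∫_{K⁻}|∇v⁻|² + β⁺∫_{K⁺}|∇v⁺|²` for the piecewise bilinear
function with pieces `vˢ = c₁ˢ + c₂ˢx + c₃ˢy + c₄xy`, `∇vˢ = (c₂ˢ + c₄y, c₃ˢ + c₄x)`. -/
noncomputable def energySqBil (βm βp c2m c3m c2p c3p c4 : ℝ) (Km Kp : Set (ℝ × ℝ)) : ℝ :=
  βm * (∫ X in Km, ((c2m + c4 * X.2) ^ 2 + (c3m + c4 * X.1) ^ 2)) +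
    βp * (∫ X in Kp, ((c2p + c4 * X.2) ^ 2 + (c3p + c4 * X.1) ^ 2))

/-- `∥β ∇v·n_B∥²_{L²(B)} = ∫_{B∩K⁻}(β⁻∇v⁻·n_B)² ds + ∫_{B∩K⁺}(β⁺∇v⁺·n_B)² ds`, where the
segment `B` from `P` to `Q` is parametrized by `t ↦ P + t(Q-P)`, `t ∈ [0,1]`, `ds`
arclength, and `∇vˢ(x,y) = (c₂ˢ + c₄y, c₃ˢ + c₄x)`. -/
noncomputable def edgeSqBilN (βm βp c2m c3m c2p c3p c4 : ℝ) (Km Kp : Set (ℝ × ℝ))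
    (P Q nB : ℝ × ℝ) : ℝ :=
  Real.sqrt ((Q.1 - P.1) ^ 2 + (Q.2 - P.2) ^ 2) *
    ((∫ t in {t : ℝ | t ∈ Set.Icc (0:ℝ) 1 ∧ P + t • (Q - P) ∈ Km},
        (βm * ((c2m + c4 * (P + t • (Q - P)).2) * nB.1 +
               (c3m + c4 * (P + t • (Q - P)).1) * nB.2)) ^ 2) +
     (∫ t in {t : ℝ | t ∈ Set.Icc (0:ℝ) 1 ∧ P + t • (Q - P) ∈ Kp},
        (βp * ((c2p + c4 * (P + t • (Q - P)).2) * nB.1 +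
               (c3p + c4 * (P + t • (Q - P)).1) * nB.2)) ^ 2))


section helpers
open MeasureTheory Set

lemma integral_linear (A B : ℝ) : ∫ t in (0:ℝ)..1, (A + B * t) = A + B / 2 := by
  have key : ∀ x ∈ Set.uIcc (0:ℝ) 1, HasDerivAt (fun t => A * t + B * t ^ 2 / 2) (A + B * x) x := by
    intro x _
    have h1 : HasDerivAt (fun t : ℝ => A * t) A x := by
      simpa using (hasDerivAt_id x).const_mul A
    have h2 : HasDerivAt (fun t : ℝ => B * t ^ 2 / 2) (B * x) x := by
      have := (hasDerivAt_pow 2 x).const_mul B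
      have := this.div_const 2
      exact this.congr_deriv (by ring)
    exact h1.add h2
  have := intervalIntegral.integral_eq_sub_of_hasDerivAt key
    ((continuous_const.add (continuous_const.mul continuous_id)).intervalIntegrable 0 1)
  rw [this]; ring

lemma integral_quadL (L c k A a b : ℝ) :
    ∫ y in a..b, (L * (c + k * y) ^ 2 + A)
      = L * (c ^ 2 * (b - a) + c * k * (b ^ 2 - a ^ 2) + k ^ 2 * (b ^ 3 - a ^ 3) / 3) + A * (b - a) := by
  have key : ∀ x ∈ Set.uIcc a b, HasDerivAt
      (fun y => L * (c ^ 2 * y + c * k * y ^ 2 + k ^ 2 * y ^ 3 / 3) + A * y)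
      (L * (c + k * x) ^ 2 + A) x := by
    intro x _
    have h1 : HasDerivAt (fun y : ℝ => c ^ 2 * y) (c ^ 2) x := by
      simpa using (hasDerivAt_id x).const_mul (c ^ 2)
    have h2 : HasDerivAt (fun y : ℝ => c * k * y ^ 2) (c * k * (2 * x)) x := by
      simpa using ((hasDerivAt_pow 2 x).const_mul (c * k))
    have h3 : HasDerivAt (fun y : ℝ => k ^ 2 * y ^ 3 / 3) (k ^ 2 * (3 * x ^ 2) / 3) x := by
      simpa using ((hasDerivAt_pow 3 x).const_mul (k ^ 2)).div_const 3
    have h4 : HasDerivAt (fun y : ℝ => A * y) A x := by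
      simpa using (hasDerivAt_id x).const_mul A
    have := (((h1.add h2).add h3).const_mul L).add h4
    exact this.congr_deriv (by ring)
  have hint : IntervalIntegrable (fun y => L * (c + k * y) ^ 2 + A) volume a b := by
    apply Continuous.intervalIntegrable; continuity
  have := intervalIntegral.integral_eq_sub_of_hasDerivAt key hint
  rw [this]; ring

lemma integral_quad (c k A a b : ℝ) :
    ∫ y in a..b, ((c + k * y) ^ 2 + A)
      = c ^ 2 * (b - a) + c * k * (b ^ 2 - a ^ 2) + k ^ 2 * (b ^ 3 - a ^ 3) / 3 + A * (b - a) := by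
  have := integral_quadL 1 c k A a b
  simp only [one_mul] at this
  rw [this]

lemma axis0 (a t : ℝ) : a ^ 2 + t ^ 2 ≤ 320 * (a ^ 2 / 2 + a * t / 4 + t ^ 2 / 24) := by
  nlinarith [sq_nonneg (a + t / 4), sq_nonneg (a + t), sq_nonneg t, sq_nonneg a]

lemma axisH (a t : ℝ) : a ^ 2 + t ^ 2 ≤ 320 * (a ^ 2 / 2 + 3 * a * t / 4 + 7 * t ^ 2 / 24) := by
  nlinarith [sq_nonneg (a + 3 * t / 4), sq_nonneg (a + t), sq_nonneg t, sq_nonneg a]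

lemma rect_lb (h c2 c3 c4 x0 y0 : ℝ) (hh : 0 < h)
    (hx0 : x0 = 0 ∨ x0 = h / 2) (hy0 : y0 = 0 ∨ y0 = h / 2) :
    h ^ 2 / 640 * (c2 ^ 2 + c3 ^ 2 + (c4 * h) ^ 2)
      ≤ ∫ X in Set.Icc x0 (x0 + h / 2) ×ˢ Set.Icc y0 (y0 + h / 2),
          ((c2 + c4 * X.2) ^ 2 + (c3 + c4 * X.1) ^ 2) := by
  have hIcc : ∀ (a : ℝ) (g : ℝ → ℝ), (∫ y in Set.Icc a (a + h/2), g y) = ∫ y in a..(a + h/2), g y := by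
    intro a g
    rw [MeasureTheory.integral_Icc_eq_integral_Ioc, ← intervalIntegral.integral_of_le (by linarith)]
  have hfub : (∫ X in Set.Icc x0 (x0 + h / 2) ×ˢ Set.Icc y0 (y0 + h / 2),
          ((c2 + c4 * X.2) ^ 2 + (c3 + c4 * X.1) ^ 2))
      = ∫ x in Set.Icc x0 (x0 + h / 2), ∫ y in Set.Icc y0 (y0 + h / 2),
          ((c2 + c4 * y) ^ 2 + (c3 + c4 * x) ^ 2) := by
    rw [Measure.volume_eq_prod]
    exact MeasureTheory.setIntegral_prod _
      ((Continuous.continuousOn (by fun_prop)).integrableOn_compact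
        (isCompact_Icc.prod isCompact_Icc))
  rw [hfub]
  set Ay : ℝ := c2 ^ 2 * (h/2) + c2 * c4 * ((y0 + h/2) ^ 2 - y0 ^ 2)
        + c4 ^ 2 * ((y0 + h/2) ^ 3 - y0 ^ 3) / 3 with hAy
  have hinner : (fun x : ℝ => ∫ y in Set.Icc y0 (y0 + h / 2), ((c2 + c4 * y) ^ 2 + (c3 + c4 * x) ^ 2))
      = fun x : ℝ => ((h/2) * (c3 + c4 * x) ^ 2 + Ay) := by
    funext x
    rw [hIcc y0 _, integral_quad]
    ring
  rw [hinner, hIcc x0 _, integral_quadL]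
  have hx2 := mul_le_mul_of_nonneg_left (axis0 c2 (c4*h)) (by positivity : (0:ℝ) ≤ h^2/640)
  have hx2' := mul_le_mul_of_nonneg_left (axisH c2 (c4*h)) (by positivity : (0:ℝ) ≤ h^2/640)
  have hx3 := mul_le_mul_of_nonneg_left (axis0 c3 (c4*h)) (by positivity : (0:ℝ) ≤ h^2/640)
  have hx3' := mul_le_mul_of_nonneg_left (axisH c3 (c4*h)) (by positivity : (0:ℝ) ≤ h^2/640)
  rcases hx0 with rfl | rfl <;> rcases hy0 with rfl | rfl <;> rw [hAy] <;> nlinarith [sq_nonneg (c4*h*h), mul_pos hh hh, sq_nonneg h]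

lemma flux_scalar (β c2 c3 c4 : ℝ) (D E n : ℝ × ℝ) :
    (∫ t in (0:ℝ)..1, β * ((c2 + c4 * (D.2 + t * (E.2 - D.2))) * n.1 +
        (c3 + c4 * (D.1 + t * (E.1 - D.1))) * n.2))
    = β * ((c2 + c4 * (D.2 + (E.2 - D.2) / 2)) * n.1 +
        (c3 + c4 * (D.1 + (E.1 - D.1) / 2)) * n.2) := by
  have hfe : (fun t : ℝ => β * ((c2 + c4 * (D.2 + t * (E.2 - D.2))) * n.1 +
        (c3 + c4 * (D.1 + t * (E.1 - D.1))) * n.2))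
      = fun t : ℝ => (β * ((c2 + c4 * D.2) * n.1 + (c3 + c4 * D.1) * n.2))
          + (β * (c4 * (E.2 - D.2) * n.1 + c4 * (E.1 - D.1) * n.2)) * t := by
    funext t; ring
  rw [hfe, integral_linear]
  ring

lemma sq3 (x y z : ℝ) : (x + y + z) ^ 2 ≤ 3 * (x ^ 2 + y ^ 2 + z ^ 2) := by
  nlinarith [sq_nonneg (x - y), sq_nonneg (x - z), sq_nonneg (y - z)]

lemma algI_core (βm βp S1 S2 g q X : ℝ) (hq : 0 < q) (hq2 : q ≤ 2) (hX : 0 ≤ X)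
    (hS1b : S1 ^ 2 ≤ q * X) (hS2b : S2 ^ 2 ≤ q * X) (hg : 0 ≤ g ^ 2) :
    (βp * S1 + (βp - βm) * g * q / 2) ^ 2 + βm ^ 2 * S2 ^ 2
      ≤ q * (64 * (βm ^ 2 + βp ^ 2) * (X + g ^ 2)) := by
  have tri : (βp * S1 + (βp - βm) * g * q / 2) ^ 2
      ≤ 2 * (βp * S1) ^ 2 + 2 * ((βp - βm) * g * q / 2) ^ 2 := by
    nlinarith [sq_nonneg (βp * S1 - (βp - βm) * g * q / 2)]
  have t1 : (βp * S1) ^ 2 ≤ βp ^ 2 * (q * X) :=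
    by nlinarith [mul_le_mul_of_nonneg_left hS1b (sq_nonneg βp)]
  have t2 : βm ^ 2 * S2 ^ 2 ≤ βm ^ 2 * (q * X) :=
    mul_le_mul_of_nonneg_left hS2b (sq_nonneg βm)
  have t3 : ((βp - βm) * g * q / 2) ^ 2 ≤ q * ((βp - βm) ^ 2 * g ^ 2) / 2 := by
    have h1 : (0:ℝ) ≤ q * (2 - q) * ((βp - βm) ^ 2 * g ^ 2) := by
      apply mul_nonneg (mul_nonneg hq.le (by linarith)) (mul_nonneg (sq_nonneg _) hg)
    nlinarith [h1]
  have t4 : (βp - βm) ^ 2 ≤ 2 * (βm ^ 2 + βp ^ 2) := by nlinarith [sq_nonneg (βp + βm)]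
  have t5 : q * ((βp - βm) ^ 2 * g ^ 2) ≤ q * (2 * (βm ^ 2 + βp ^ 2) * g ^ 2) := by
    apply mul_le_mul_of_nonneg_left _ hq.le
    nlinarith [mul_le_mul_of_nonneg_right t4 hg]
  have t6 : (0:ℝ) ≤ q * ((βm ^ 2 + βp ^ 2) * X) :=
    mul_nonneg hq.le (mul_nonneg (by positivity) hX)
  have t7 : (0:ℝ) ≤ q * ((βm ^ 2 + βp ^ 2) * g ^ 2) :=
    mul_nonneg hq.le (mul_nonneg (by positivity) hg)
  nlinarith [tri, t1, t2, t3, t5, t6, t7]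

/-- Type I algebra: bound minus-side coefficients by plus-side ones. -/

lemma algI (βm βp c2m c3m c2p c3p g d e : ℝ)
    (hq : 0 < d ^ 2 + e ^ 2) (hd0 : 0 ≤ d) (hd1 : d ≤ 1) (he0 : 0 ≤ e) (he1 : e ≤ 1)
    (hE2 : βm * (d * c2m + e * c3m) + βm * g * (d ^ 2 + e ^ 2) / 2
        = βp * (d * c2p + e * c3p) + βp * g * (d ^ 2 + e ^ 2) / 2)
    (hE1 : e * c2m - d * c3m = e * c2p - d * c3p) :
    βm ^ 2 * (c2m ^ 2 + c3m ^ 2) ≤ 64 * (βm ^ 2 + βp ^ 2) * (c2p ^ 2 + c3p ^ 2 + g ^ 2) := by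
  have hq2 : d ^ 2 + e ^ 2 ≤ 2 := by nlinarith
  have hS1b : (d * c2p + e * c3p) ^ 2 ≤ (d ^ 2 + e ^ 2) * (c2p ^ 2 + c3p ^ 2) := by
    nlinarith [sq_nonneg (e * c2p - d * c3p)]
  have hS2b : (e * c2p - d * c3p) ^ 2 ≤ (d ^ 2 + e ^ 2) * (c2p ^ 2 + c3p ^ 2) := by
    nlinarith [sq_nonneg (d * c2p + e * c3p)]
  have hcore := algI_core βm βp (d * c2p + e * c3p) (e * c2p - d * c3p) g (d ^ 2 + e ^ 2)
    (c2p ^ 2 + c3p ^ 2) hq hq2 (by positivity) hS1b hS2b (sq_nonneg g)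
  have I2 : βm * (d ^ 2 + e ^ 2) * c2m
      = d * (βp * (d * c2p + e * c3p) + (βp - βm) * g * (d ^ 2 + e ^ 2) / 2)
        + βm * e * (e * c2p - d * c3p) := by
    linear_combination d * hE2 + βm * e * hE1
  have I3 : βm * (d ^ 2 + e ^ 2) * c3m
      = e * (βp * (d * c2p + e * c3p) + (βp - βm) * g * (d ^ 2 + e ^ 2) / 2)
        - βm * d * (e * c2p - d * c3p) := by
    linear_combination e * hE2 - βm * d * hE1
  have key2 : (βm * (d ^ 2 + e ^ 2) * c2m) ^ 2 + (βm * (d ^ 2 + e ^ 2) * c3m) ^ 2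
      = (d ^ 2 + e ^ 2) * ((βp * (d * c2p + e * c3p) + (βp - βm) * g * (d ^ 2 + e ^ 2) / 2) ^ 2
          + βm ^ 2 * (e * c2p - d * c3p) ^ 2) := by
    rw [I2, I3]; ring
  have hfin : (d ^ 2 + e ^ 2) ^ 2 * (βm ^ 2 * (c2m ^ 2 + c3m ^ 2))
      ≤ (d ^ 2 + e ^ 2) ^ 2 * (64 * (βm ^ 2 + βp ^ 2) * (c2p ^ 2 + c3p ^ 2 + g ^ 2)) := by
    calc (d ^ 2 + e ^ 2) ^ 2 * (βm ^ 2 * (c2m ^ 2 + c3m ^ 2))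
        = (βm * (d ^ 2 + e ^ 2) * c2m) ^ 2 + (βm * (d ^ 2 + e ^ 2) * c3m) ^ 2 := by ring
      _ = (d ^ 2 + e ^ 2) * ((βp * (d * c2p + e * c3p)
            + (βp - βm) * g * (d ^ 2 + e ^ 2) / 2) ^ 2
            + βm ^ 2 * (e * c2p - d * c3p) ^ 2) := key2
      _ ≤ (d ^ 2 + e ^ 2) * ((d ^ 2 + e ^ 2)
            * (64 * (βm ^ 2 + βp ^ 2) * (c2p ^ 2 + c3p ^ 2 + g ^ 2))) :=
          mul_le_mul_of_nonneg_left hcore hq.le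
      _ = (d ^ 2 + e ^ 2) ^ 2 * (64 * (βm ^ 2 + βp ^ 2) * (c2p ^ 2 + c3p ^ 2 + g ^ 2)) := by ring
  exact le_of_mul_le_mul_left hfin (by positivity)

lemma algII_core (β1 β2 u v Z D2 D3 g w : ℝ) (hw : w ^ 2 ≤ 1)
    (hub : u ^ 2 ≤ 2 * (D2 ^ 2 + D3 ^ 2)) (hvb : v ^ 2 ≤ 2 * (D2 ^ 2 + D3 ^ 2))
    (hZb : Z ^ 2 ≤ 2 * (β1 ^ 2 + β2 ^ 2) * g ^ 2) :
    (β2 * u + Z - β1 * w * v) ^ 2 + (w * (β2 * u + Z) + β1 * v) ^ 2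
      ≤ 64 * (β1 ^ 2 + β2 ^ 2) * (D2 ^ 2 + D3 ^ 2 + g ^ 2) := by
  have t1 : (β2 * u) ^ 2 ≤ 2 * β2 ^ 2 * (D2 ^ 2 + D3 ^ 2) := by
    nlinarith [mul_le_mul_of_nonneg_left hub (sq_nonneg β2)]
  have t2 : (β1 * w * v) ^ 2 ≤ 2 * β1 ^ 2 * (D2 ^ 2 + D3 ^ 2) := by
    have hv0 : (0:ℝ) ≤ v ^ 2 := sq_nonneg v
    have : w ^ 2 * v ^ 2 ≤ v ^ 2 := by nlinarith
    nlinarith [mul_le_mul_of_nonneg_left hvb (sq_nonneg β1),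
      mul_le_mul_of_nonneg_left this (sq_nonneg β1)]
  have t2' : (β1 * v) ^ 2 ≤ 2 * β1 ^ 2 * (D2 ^ 2 + D3 ^ 2) := by
    nlinarith [mul_le_mul_of_nonneg_left hvb (sq_nonneg β1)]
  have tri1 : (β2 * u + Z - β1 * w * v) ^ 2
      ≤ 3 * ((β2 * u) ^ 2 + Z ^ 2 + (β1 * w * v) ^ 2) := by
    have := sq3 (β2 * u) Z (-(β1 * w * v))
    nlinarith [this]
  have ts : (β2 * u + Z) ^ 2 ≤ 2 * (β2 * u) ^ 2 + 2 * Z ^ 2 := by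
    nlinarith [sq_nonneg (β2 * u - Z)]
  have tw : (w * (β2 * u + Z)) ^ 2 ≤ (β2 * u + Z) ^ 2 := by
    nlinarith [sq_nonneg (β2 * u + Z), mul_nonneg (sq_nonneg w) (sq_nonneg (β2 * u + Z))]
  have tri2 : (w * (β2 * u + Z) + β1 * v) ^ 2
      ≤ 2 * (w * (β2 * u + Z)) ^ 2 + 2 * (β1 * v) ^ 2 := by
    nlinarith [sq_nonneg (w * (β2 * u + Z) - β1 * v)]
  nlinarith [tri1, tri2, ts, tw, t1, t2, t2', hZb,
    mul_nonneg (add_nonneg (sq_nonneg β1) (sq_nonneg β2))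
      (add_nonneg (add_nonneg (sq_nonneg D2) (sq_nonneg D3)) (sq_nonneg g))]

/-- Type II algebra. -/

lemma algII (β1 β2 C2 C3 D2 D3 g w s : ℝ) (hw : w ^ 2 ≤ 1) (hs0 : 0 ≤ s) (hs2 : s ≤ 2)
    (hA : β1 * (C2 + w * C3) = β2 * (D2 + w * D3) + (β2 - β1) * (g / 2) * s)
    (hB : -(w * C2) + C3 = -(w * D2) + D3) :
    β1 ^ 2 * (C2 ^ 2 + C3 ^ 2) ≤ 64 * (β1 ^ 2 + β2 ^ 2) * (D2 ^ 2 + D3 ^ 2 + g ^ 2) := by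
  have hub : (D2 + w * D3) ^ 2 ≤ 2 * (D2 ^ 2 + D3 ^ 2) := by
    nlinarith [sq_nonneg (-(w * D2) + D3), sq_nonneg D2, sq_nonneg D3,
      sq_nonneg (D2 + w * D3), mul_le_mul_of_nonneg_right hw (sq_nonneg D3),
      sq_nonneg (w * D3), sq_nonneg (D2 - D3), sq_nonneg (D2 + D3)]
  have hvb : (-(w * D2) + D3) ^ 2 ≤ 2 * (D2 ^ 2 + D3 ^ 2) := by
    nlinarith [mul_le_mul_of_nonneg_right hw (sq_nonneg D2)]
  have hZb : ((β2 - β1) * (g / 2) * s) ^ 2 ≤ 2 * (β1 ^ 2 + β2 ^ 2) * g ^ 2 := by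
    have h4 : s ^ 2 ≤ 4 := by nlinarith
    have h5 : ((β2 - β1) * (g / 2)) ^ 2 * s ^ 2 ≤ ((β2 - β1) * (g / 2)) ^ 2 * 4 :=
      mul_le_mul_of_nonneg_left h4 (sq_nonneg _)
    nlinarith [h5, sq_nonneg ((β1 + β2) * g)]
  have hcore := algII_core β1 β2 (D2 + w * D3) (-(w * D2) + D3) ((β2 - β1) * (g / 2) * s)
    D2 D3 g w hw hub hvb hZb
  have I2 : β1 * (1 + w ^ 2) * C2
      = β2 * (D2 + w * D3) + (β2 - β1) * (g / 2) * s - β1 * w * (-(w * D2) + D3) := by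
    linear_combination hA - β1 * w * hB
  have I3 : β1 * (1 + w ^ 2) * C3
      = w * (β2 * (D2 + w * D3) + (β2 - β1) * (g / 2) * s) + β1 * (-(w * D2) + D3) := by
    linear_combination w * hA + β1 * hB
  have h2 : β1 ^ 2 * C2 ^ 2 ≤ (β1 * (1 + w ^ 2) * C2) ^ 2 := by
    nlinarith [sq_nonneg (w ^ 2), sq_nonneg (w * C2 * β1), sq_nonneg (w ^ 2 * C2 * β1)]
  have h3 : β1 ^ 2 * C3 ^ 2 ≤ (β1 * (1 + w ^ 2) * C3) ^ 2 := by
    nlinarith [sq_nonneg (w ^ 2), sq_nonneg (w * C3 * β1), sq_nonneg (w ^ 2 * C3 * β1)]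
  have key : (β1 * (1 + w ^ 2) * C2) ^ 2 + (β1 * (1 + w ^ 2) * C3) ^ 2
      = (β2 * (D2 + w * D3) + (β2 - β1) * (g / 2) * s - β1 * w * (-(w * D2) + D3)) ^ 2
        + (w * (β2 * (D2 + w * D3) + (β2 - β1) * (g / 2) * s) + β1 * (-(w * D2) + D3)) ^ 2 := by
    rw [I2, I3]
  linarith [h2, h3, key ▸ hcore]

lemma ptwise (β c2 c3 c4 n1 n2 x y hm : ℝ) (hn : n1 ^ 2 + n2 ^ 2 = 1)
    (hx0 : 0 ≤ x) (hx1 : x ≤ hm) (hy0 : 0 ≤ y) (hy1 : y ≤ hm) :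
    (β * ((c2 + c4 * y) * n1 + (c3 + c4 * x) * n2)) ^ 2
      ≤ 4 * β ^ 2 * (c2 ^ 2 + c3 ^ 2 + (c4 * hm) ^ 2) := by
  have hcs : ((c2 + c4 * y) * n1 + (c3 + c4 * x) * n2) ^ 2
      ≤ (c2 + c4 * y) ^ 2 + (c3 + c4 * x) ^ 2 := by
    nlinarith [sq_nonneg ((c2 + c4 * y) * n2 - (c3 + c4 * x) * n1)]
  have hy2 : y ^ 2 ≤ hm ^ 2 := by nlinarith
  have hx2 : x ^ 2 ≤ hm ^ 2 := by nlinarith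
  have hu : (c2 + c4 * y) ^ 2 ≤ 2 * c2 ^ 2 + 2 * (c4 * hm) ^ 2 := by
    nlinarith [sq_nonneg (c2 - c4 * y), mul_le_mul_of_nonneg_left hy2 (sq_nonneg c4)]
  have hv : (c3 + c4 * x) ^ 2 ≤ 2 * c3 ^ 2 + 2 * (c4 * hm) ^ 2 := by
    nlinarith [sq_nonneg (c3 - c4 * x), mul_le_mul_of_nonneg_left hx2 (sq_nonneg c4)]
  calc (β * ((c2 + c4 * y) * n1 + (c3 + c4 * x) * n2)) ^ 2
      = β ^ 2 * ((c2 + c4 * y) * n1 + (c3 + c4 * x) * n2) ^ 2 := by ring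
    _ ≤ β ^ 2 * (2 * c2 ^ 2 + 2 * (c4 * hm) ^ 2 + (2 * c3 ^ 2 + 2 * (c4 * hm) ^ 2)) := by
        apply mul_le_mul_of_nonneg_left _ (sq_nonneg β)
        linarith
    _ ≤ 4 * β ^ 2 * (c2 ^ 2 + c3 ^ 2 + (c4 * hm) ^ 2) := by nlinarith [sq_nonneg β, sq_nonneg (c4*hm), sq_nonneg c2, sq_nonneg c3, sq_nonneg (β*(c4*hm)), sq_nonneg (β*c2), sq_nonneg (β*c3)]

lemma edge_side (β c2 c3 c4 h : ℝ) (K : Set (ℝ × ℝ)) (P Q nB : ℝ × ℝ)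
    (hh : 0 < h) (hK : MeasurableSet K)
    (hP1 : P.1 ∈ Set.Icc (0:ℝ) h) (hP2 : P.2 ∈ Set.Icc (0:ℝ) h)
    (hQ1 : Q.1 ∈ Set.Icc (0:ℝ) h) (hQ2 : Q.2 ∈ Set.Icc (0:ℝ) h)
    (hnB : nB.1 ^ 2 + nB.2 ^ 2 = 1) :
    (∫ t in {t : ℝ | t ∈ Set.Icc (0:ℝ) 1 ∧ P + t • (Q - P) ∈ K},
        (β * ((c2 + c4 * (P + t • (Q - P)).2) * nB.1 +
               (c3 + c4 * (P + t • (Q - P)).1) * nB.2)) ^ 2)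
      ≤ 4 * β ^ 2 * (c2 ^ 2 + c3 ^ 2 + (c4 * h) ^ 2) := by
  set S : Set ℝ := {t : ℝ | t ∈ Set.Icc (0:ℝ) 1 ∧ P + t • (Q - P) ∈ K} with hSdef
  have hsub : S ⊆ Set.Icc (0:ℝ) 1 := fun t ht => ht.1
  have hScap : S = Set.Icc (0:ℝ) 1 ∩ (fun t : ℝ => P + t • (Q - P)) ⁻¹' K := rfl
  have hcont : Continuous fun t : ℝ => P + t • (Q - P) := by
    exact continuous_const.add (continuous_id.smul continuous_const)
  have hmeas : MeasurableSet S := by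
    rw [hScap]
    exact measurableSet_Icc.inter (hK.preimage hcont.measurable)
  have hfcont : Continuous fun t : ℝ =>
      (β * ((c2 + c4 * (P + t • (Q - P)).2) * nB.1 +
        (c3 + c4 * (P + t • (Q - P)).1) * nB.2)) ^ 2 := by fun_prop
  have hfin : IntegrableOn (fun t : ℝ =>
      (β * ((c2 + c4 * (P + t • (Q - P)).2) * nB.1 +
        (c3 + c4 * (P + t • (Q - P)).1) * nB.2)) ^ 2) (Set.Icc (0:ℝ) 1) :=
    hfcont.integrableOn_Icc
  have hmu : volume S ≤ 1 := by
    calc volume S ≤ volume (Set.Icc (0:ℝ) 1) := measure_mono hsub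
      _ = 1 := by simp
  have hC : (0:ℝ) ≤ 4 * β ^ 2 * (c2 ^ 2 + c3 ^ 2 + (c4 * h) ^ 2) := by positivity
  calc (∫ t in S, (β * ((c2 + c4 * (P + t • (Q - P)).2) * nB.1 +
               (c3 + c4 * (P + t • (Q - P)).1) * nB.2)) ^ 2)
      ≤ ∫ t in S, (4 * β ^ 2 * (c2 ^ 2 + c3 ^ 2 + (c4 * h) ^ 2)) := by
        apply setIntegral_mono_on (hfin.mono_set hsub)
          (integrableOn_const ((lt_of_le_of_lt hmu (by norm_num)).ne)) hmeas
        intro t ht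
        have ht1 := ht.1.1
        have ht2 := ht.1.2
        have hx0 : 0 ≤ (P + t • (Q - P)).1 := by
          simp only [Prod.fst_add, Prod.smul_fst, Prod.fst_sub, smul_eq_mul]
          nlinarith [hP1.1, hQ1.1, hP1.2, hQ1.2]
        have hx1 : (P + t • (Q - P)).1 ≤ h := by
          simp only [Prod.fst_add, Prod.smul_fst, Prod.fst_sub, smul_eq_mul]
          nlinarith [hP1.1, hQ1.1, hP1.2, hQ1.2]
        have hy0 : 0 ≤ (P + t • (Q - P)).2 := by
          simp only [Prod.snd_add, Prod.smul_snd, Prod.snd_sub, smul_eq_mul]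
          nlinarith [hP2.1, hQ2.1, hP2.2, hQ2.2]
        have hy1 : (P + t • (Q - P)).2 ≤ h := by
          simp only [Prod.snd_add, Prod.smul_snd, Prod.snd_sub, smul_eq_mul]
          nlinarith [hP2.1, hQ2.1, hP2.2, hQ2.2]
        exact ptwise β c2 c3 c4 nB.1 nB.2 _ _ h hnB hx0 hx1 hy0 hy1
    _ = (volume S).toReal * (4 * β ^ 2 * (c2 ^ 2 + c3 ^ 2 + (c4 * h) ^ 2)) := by
        rw [setIntegral_const]; rfl
    _ ≤ 1 * (4 * β ^ 2 * (c2 ^ 2 + c3 ^ 2 + (c4 * h) ^ 2)) := by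
        apply mul_le_mul_of_nonneg_right _ hC
        have h1 := ENNReal.toReal_mono (show (1:ENNReal) ≠ ⊤ by norm_num) hmu
        simpa using h1
    _ = _ := one_mul _

lemma energy_side (β c2 c3 c4 h x0 y0 : ℝ) (K : Set (ℝ × ℝ)) (hβ : 0 ≤ β) (hh : 0 < h)
    (hx0 : x0 = 0 ∨ x0 = h / 2) (hy0 : y0 = 0 ∨ y0 = h / 2)
    (hKC : IsCompact K)
    (hrect : Set.Icc x0 (x0 + h / 2) ×ˢ Set.Icc y0 (y0 + h / 2) ⊆ K) :
    h ^ 2 / 640 * (β * (c2 ^ 2 + c3 ^ 2 + (c4 * h) ^ 2))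
      ≤ β * ∫ X in K, ((c2 + c4 * X.2) ^ 2 + (c3 + c4 * X.1) ^ 2) := by
  have hint : IntegrableOn (fun X : ℝ × ℝ => (c2 + c4 * X.2) ^ 2 + (c3 + c4 * X.1) ^ 2) K :=
    (Continuous.continuousOn (by fun_prop)).integrableOn_compact hKC
  have hmono : (∫ X in Set.Icc x0 (x0 + h / 2) ×ˢ Set.Icc y0 (y0 + h / 2),
      ((c2 + c4 * X.2) ^ 2 + (c3 + c4 * X.1) ^ 2))
      ≤ ∫ X in K, ((c2 + c4 * X.2) ^ 2 + (c3 + c4 * X.1) ^ 2) := by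
    apply setIntegral_mono_set hint
    · filter_upwards with X using by positivity
    · exact HasSubset.Subset.eventuallyLE hrect
  have := (rect_lb h c2 c3 c4 x0 y0 hh hx0 hy0).trans hmono
  calc h ^ 2 / 640 * (β * (c2 ^ 2 + c3 ^ 2 + (c4 * h) ^ 2))
      = β * (h ^ 2 / 640 * (c2 ^ 2 + c3 ^ 2 + (c4 * h) ^ 2)) := by ring
    _ ≤ β * ∫ X in K, ((c2 + c4 * X.2) ^ 2 + (c3 + c4 * X.1) ^ 2) :=
        mul_le_mul_of_nonneg_left this hβ

lemma numeric (βm βp h E eS lm lp g2 : ℝ) (hβm : 0 < βm) (hβp : 0 < βp) (hh : 0 < h)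
    (hE0 : 0 ≤ E) (hlm : 0 ≤ lm) (hlp : 0 ≤ lp) (hg2 : 0 ≤ g2) (hg2lm : g2 ≤ lm)
    (hEdge : eS ≤ 4 * h * (βm ^ 2 * lm + βp ^ 2 * lp))
    (halg : βp ^ 2 * (lp - g2) ≤ 64 * (βm ^ 2 + βp ^ 2) * lm)
    (hEn : h ^ 2 / 640 * (βm * lm) ≤ E) :
    eS ≤ (2560 * (βm ^ 2 + βp ^ 2) * (2 + 64 * (βm ^ 2 + βp ^ 2) * ((βm⁻¹) ^ 2 + (βp⁻¹) ^ 2))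
      * (βm⁻¹ + βp⁻¹)) * h⁻¹ * E := by
  set B : ℝ := βm ^ 2 + βp ^ 2 with hB
  have hB0 : 0 < B := by positivity
  have h1 : lp ≤ 64 * B * lm * (βp⁻¹) ^ 2 + g2 := by
    have step := mul_le_mul_of_nonneg_right halg (by positivity : (0:ℝ) ≤ (βp⁻¹) ^ 2)
    have hid : βp ^ 2 * (lp - g2) * (βp⁻¹) ^ 2 = lp - g2 := by
      field_simp
    rw [hid] at step
    linarith
  have h2 : eS ≤ 4 * h * (B * ((2 + 64 * B * (βp⁻¹) ^ 2) * lm)) := by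
    have a1 : βm ^ 2 * lm + βp ^ 2 * lp ≤ B * ((2 + 64 * B * (βp⁻¹) ^ 2) * lm) := by
      nlinarith [mul_le_mul_of_nonneg_left h1 (sq_nonneg βp), sq_nonneg βm, sq_nonneg βp,
        mul_le_mul_of_nonneg_left h1 hB0.le,
        mul_nonneg (mul_nonneg hB0.le hB0.le) (mul_nonneg (sq_nonneg βp⁻¹) hlm),
        mul_nonneg (sq_nonneg βm) hlm, mul_nonneg (sq_nonneg βm) hg2,
        mul_nonneg (sq_nonneg βm) (mul_nonneg (mul_nonneg hB0.le (sq_nonneg βp⁻¹)) hlm)]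
    calc eS ≤ 4 * h * (βm ^ 2 * lm + βp ^ 2 * lp) := hEdge
      _ ≤ 4 * h * (B * ((2 + 64 * B * (βp⁻¹) ^ 2) * lm)) := by
          apply mul_le_mul_of_nonneg_left a1 (by positivity)
  have h3 : lm ≤ 640 * βm⁻¹ * (h⁻¹) ^ 2 * E := by
    have step := mul_le_mul_of_nonneg_left hEn
      (by positivity : (0:ℝ) ≤ 640 * βm⁻¹ * (h⁻¹) ^ 2)
    have hid : 640 * βm⁻¹ * (h⁻¹) ^ 2 * (h ^ 2 / 640 * (βm * lm)) = lm := by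
      field_simp
    rw [hid] at step
    exact step
  have h4 : eS ≤ 4 * h * (B * ((2 + 64 * B * (βp⁻¹) ^ 2) * (640 * βm⁻¹ * (h⁻¹) ^ 2 * E))) := by
    refine h2.trans ?_
    apply mul_le_mul_of_nonneg_left _ (by positivity)
    apply mul_le_mul_of_nonneg_left _ hB0.le
    apply mul_le_mul_of_nonneg_left h3 (by positivity)
  have hhi : h * h⁻¹ = 1 := mul_inv_cancel₀ hh.ne'
  have h5 : 4 * h * (B * ((2 + 64 * B * (βp⁻¹) ^ 2) * (640 * βm⁻¹ * (h⁻¹) ^ 2 * E)))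
      = (2560 * B * (2 + 64 * B * (βp⁻¹) ^ 2) * βm⁻¹) * h⁻¹ * E := by
    field_simp
    ring
  rw [h5] at h4
  refine h4.trans ?_
  have hmono : 2560 * B * (2 + 64 * B * (βp⁻¹) ^ 2) * βm⁻¹
      ≤ 2560 * B * (2 + 64 * B * ((βm⁻¹) ^ 2 + (βp⁻¹) ^ 2)) * (βm⁻¹ + βp⁻¹) := by
    have e1 : (2 + 64 * B * (βp⁻¹) ^ 2) ≤ (2 + 64 * B * ((βm⁻¹) ^ 2 + (βp⁻¹) ^ 2)) := by
      nlinarith [mul_nonneg hB0.le (sq_nonneg βm⁻¹)]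
    have e2 : βm⁻¹ ≤ βm⁻¹ + βp⁻¹ := by
      have : 0 < βp⁻¹ := by positivity
      linarith
    have p1 : (0:ℝ) < 2 + 64 * B * (βp⁻¹) ^ 2 := by positivity
    have p2 : (0:ℝ) < βm⁻¹ := by positivity
    have := mul_le_mul (mul_le_mul_of_nonneg_left e1 (by positivity : (0:ℝ) ≤ 2560 * B)) e2
      p2.le (by positivity)
    linarith [this]
  have hfac : (0:ℝ) ≤ h⁻¹ * E := by positivity
  calc 2560 * B * (2 + 64 * B * (βp⁻¹) ^ 2) * βm⁻¹ * h⁻¹ * E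
      = (2560 * B * (2 + 64 * B * (βp⁻¹) ^ 2) * βm⁻¹) * (h⁻¹ * E) := by ring
    _ ≤ (2560 * B * (2 + 64 * B * ((βm⁻¹) ^ 2 + (βp⁻¹) ^ 2)) * (βm⁻¹ + βp⁻¹)) * (h⁻¹ * E) :=
        mul_le_mul_of_nonneg_right hmono hfac
    _ = _ := by ring

lemma master (βm βp h c2m c3m c2p c3p c4 : ℝ) (Km Kp : Set (ℝ × ℝ)) (P Q nB : ℝ × ℝ)
    (hβm : 0 < βm) (hβp : 0 < βp) (hh : 0 < h)
    (hKmM : MeasurableSet Km) (hKpM : MeasurableSet Kp)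
    (hKmC : IsCompact Km) (hKpC : IsCompact Kp)
    (hlen : Real.sqrt ((Q.1 - P.1) ^ 2 + (Q.2 - P.2) ^ 2) = h)
    (hP1 : P.1 ∈ Set.Icc (0:ℝ) h) (hP2 : P.2 ∈ Set.Icc (0:ℝ) h)
    (hQ1 : Q.1 ∈ Set.Icc (0:ℝ) h) (hQ2 : Q.2 ∈ Set.Icc (0:ℝ) h)
    (hnB : nB.1 ^ 2 + nB.2 ^ 2 = 1)
    (x0 y0 : ℝ) (hx0 : x0 = 0 ∨ x0 = h / 2) (hy0 : y0 = 0 ∨ y0 = h / 2)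
    (big : (Set.Icc x0 (x0 + h / 2) ×ˢ Set.Icc y0 (y0 + h / 2) ⊆ Km ∧
              βp ^ 2 * (c2p ^ 2 + c3p ^ 2)
                ≤ 64 * (βm ^ 2 + βp ^ 2) * (c2m ^ 2 + c3m ^ 2 + (c4 * h) ^ 2)) ∨
           (Set.Icc x0 (x0 + h / 2) ×ˢ Set.Icc y0 (y0 + h / 2) ⊆ Kp ∧
              βm ^ 2 * (c2m ^ 2 + c3m ^ 2)
                ≤ 64 * (βm ^ 2 + βp ^ 2) * (c2p ^ 2 + c3p ^ 2 + (c4 * h) ^ 2))) :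
    Real.sqrt (edgeSqBilN βm βp c2m c3m c2p c3p c4 Km Kp P Q nB)
      ≤ Real.sqrt (2560 * (βm ^ 2 + βp ^ 2)
            * (2 + 64 * (βm ^ 2 + βp ^ 2) * ((βm⁻¹) ^ 2 + (βp⁻¹) ^ 2)) * (βm⁻¹ + βp⁻¹))
          * Real.sqrt h * (Real.sqrt (h ^ 2))⁻¹
          * Real.sqrt (energySqBil βm βp c2m c3m c2p c3p c4 Km Kp) := by
  set C2 : ℝ := 2560 * (βm ^ 2 + βp ^ 2)
      * (2 + 64 * (βm ^ 2 + βp ^ 2) * ((βm⁻¹) ^ 2 + (βp⁻¹) ^ 2)) * (βm⁻¹ + βp⁻¹) with hC2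
  have hC2pos : 0 < C2 := by rw [hC2]; positivity
  set E : ℝ := energySqBil βm βp c2m c3m c2p c3p c4 Km Kp with hE
  set lm : ℝ := c2m ^ 2 + c3m ^ 2 + (c4 * h) ^ 2 with hlm
  set lp : ℝ := c2p ^ 2 + c3p ^ 2 + (c4 * h) ^ 2 with hlp
  have hJm0 : 0 ≤ ∫ X in Km, ((c2m + c4 * X.2) ^ 2 + (c3m + c4 * X.1) ^ 2) :=
    setIntegral_nonneg hKmM fun X _ => by positivity
  have hJp0 : 0 ≤ ∫ X in Kp, ((c2p + c4 * X.2) ^ 2 + (c3p + c4 * X.1) ^ 2) :=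
    setIntegral_nonneg hKpM fun X _ => by positivity
  have hE0 : 0 ≤ E := by
    rw [hE]
    unfold energySqBil
    have := mul_nonneg hβm.le hJm0
    have := mul_nonneg hβp.le hJp0
    linarith
  have hEdge : edgeSqBilN βm βp c2m c3m c2p c3p c4 Km Kp P Q nB
      ≤ 4 * h * (βm ^ 2 * lm + βp ^ 2 * lp) := by
    unfold edgeSqBilN
    rw [hlen]
    have e1 := edge_side βm c2m c3m c4 h Km P Q nB hh hKmM hP1 hP2 hQ1 hQ2 hnB
    have e2 := edge_side βp c2p c3p c4 h Kp P Q nB hh hKpM hP1 hP2 hQ1 hQ2 hnB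
    calc h * (_ + _) ≤ h * (4 * βm ^ 2 * lm + 4 * βp ^ 2 * lp) := by
          apply mul_le_mul_of_nonneg_left _ hh.le
          rw [hlm, hlp]
          exact add_le_add e1 e2
      _ = 4 * h * (βm ^ 2 * lm + βp ^ 2 * lp) := by ring
  have key : edgeSqBilN βm βp c2m c3m c2p c3p c4 Km Kp P Q nB ≤ C2 * h⁻¹ * E := by
    rcases big with ⟨hrect, halg⟩ | ⟨hrect, halg⟩
    · -- big side is Km; swap roles in `numeric`
      have hEn : h ^ 2 / 640 * (βm * lm) ≤ E := by
        have := energy_side βm c2m c3m c4 h x0 y0 Km hβm.le hh hx0 hy0 hKmC hrect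
        rw [hE]; unfold energySqBil
        have h2 := mul_nonneg hβp.le hJp0
        rw [hlm]
        linarith
      have halg' : βp ^ 2 * (lp - (c4 * h) ^ 2) ≤ 64 * (βm ^ 2 + βp ^ 2) * lm := by
        calc βp ^ 2 * (lp - (c4 * h) ^ 2) = βp ^ 2 * (c2p ^ 2 + c3p ^ 2) := by rw [hlp]; ring
          _ ≤ 64 * (βm ^ 2 + βp ^ 2) * (c2m ^ 2 + c3m ^ 2 + (c4 * h) ^ 2) := halg
          _ = 64 * (βm ^ 2 + βp ^ 2) * lm := by rw [hlm]
      have hEdge' : edgeSqBilN βm βp c2m c3m c2p c3p c4 Km Kp P Q nB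
          ≤ 4 * h * (βm ^ 2 * lm + βp ^ 2 * lp) := hEdge
      have hnum := numeric βm βp h E (edgeSqBilN βm βp c2m c3m c2p c3p c4 Km Kp P Q nB)
        lm lp ((c4 * h) ^ 2) hβm hβp hh hE0 (by rw [hlm]; positivity) (by rw [hlp]; positivity)
        (by positivity) (by rw [hlm]; nlinarith [sq_nonneg c2m, sq_nonneg c3m])
        hEdge' (by linarith [halg']) hEn
      calc edgeSqBilN βm βp c2m c3m c2p c3p c4 Km Kp P Q nB
          ≤ (2560 * (βm ^ 2 + βp ^ 2) * (2 + 64 * (βm ^ 2 + βp ^ 2)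
              * ((βm⁻¹) ^ 2 + (βp⁻¹) ^ 2)) * (βm⁻¹ + βp⁻¹)) * h⁻¹ * E := hnum
        _ = C2 * h⁻¹ * E := by rw [hC2]
    · have hEn : h ^ 2 / 640 * (βp * lp) ≤ E := by
        have := energy_side βp c2p c3p c4 h x0 y0 Kp hβp.le hh hx0 hy0 hKpC hrect
        rw [hE]; unfold energySqBil
        have h2 := mul_nonneg hβm.le hJm0
        rw [hlp]
        linarith
      have halg' : βm ^ 2 * (lm - (c4 * h) ^ 2) ≤ 64 * (βm ^ 2 + βp ^ 2) * lp := by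
        calc βm ^ 2 * (lm - (c4 * h) ^ 2) = βm ^ 2 * (c2m ^ 2 + c3m ^ 2) := by rw [hlm]; ring
          _ ≤ 64 * (βm ^ 2 + βp ^ 2) * (c2p ^ 2 + c3p ^ 2 + (c4 * h) ^ 2) := halg
          _ = 64 * (βm ^ 2 + βp ^ 2) * lp := by rw [hlp]
      have halg'' : βm ^ 2 * (lm - (c4 * h) ^ 2) ≤ 64 * (βp ^ 2 + βm ^ 2) * lp := by
        linarith [halg']
      have hEdge' : edgeSqBilN βm βp c2m c3m c2p c3p c4 Km Kp P Q nB
          ≤ 4 * h * (βp ^ 2 * lp + βm ^ 2 * lm) := by linarith [hEdge]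
      have hnum := numeric βp βm h E (edgeSqBilN βm βp c2m c3m c2p c3p c4 Km Kp P Q nB)
        lp lm ((c4 * h) ^ 2) hβp hβm hh hE0 (by rw [hlp]; positivity) (by rw [hlm]; positivity)
        (by positivity) (by rw [hlp]; nlinarith [sq_nonneg c2p, sq_nonneg c3p])
        hEdge' halg'' hEn
      calc edgeSqBilN βm βp c2m c3m c2p c3p c4 Km Kp P Q nB
          ≤ (2560 * (βp ^ 2 + βm ^ 2) * (2 + 64 * (βp ^ 2 + βm ^ 2)
              * ((βp⁻¹) ^ 2 + (βm⁻¹) ^ 2)) * (βp⁻¹ + βm⁻¹)) * h⁻¹ * E := hnum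
        _ = C2 * h⁻¹ * E := by rw [hC2]; ring_nf
  -- final sqrt wrap
  have step1 : Real.sqrt (edgeSqBilN βm βp c2m c3m c2p c3p c4 Km Kp P Q nB)
      ≤ Real.sqrt (C2 * h⁻¹ * E) := Real.sqrt_le_sqrt key
  have step2 : Real.sqrt (C2 * h⁻¹ * E)
      = Real.sqrt C2 * Real.sqrt h * (Real.sqrt (h ^ 2))⁻¹ * Real.sqrt E := by
    rw [Real.sqrt_mul (by positivity : (0:ℝ) ≤ C2 * h⁻¹), Real.sqrt_mul hC2pos.le,
      Real.sqrt_inv, Real.sqrt_sq hh.le]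
    have hs : Real.sqrt h ≠ 0 := Real.sqrt_ne_zero'.mpr hh
    have hss : Real.sqrt h * Real.sqrt h = h := Real.mul_self_sqrt hh.le
    have key2 : Real.sqrt h * h⁻¹ = (Real.sqrt h)⁻¹ := by
      rw [← hss]
      field_simp
      rw [Real.sqrt_sq (Real.sqrt_nonneg _)]
    rw [← key2]
    ring
  rw [step2] at step1
  exact step1

end helpers

/-- trace inequality
`∥β ∇v·n_B∥_{L²(B)} ≤ C h^{1/2}|K|^{-1/2}∥√β ∇v∥_{L²(K)}` for bilinear IFE functions on
`K = [0,h]²`, for interface configurations of Type I or Type II and every edge `B` of `K`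
with unit normal `n_B`, with `C` depending only on `β⁻, β⁺`. -/
theorem stmt11 (βm βp : ℝ) (hβm : 0 < βm) (hβp : 0 < βp) :
    ∃ C : ℝ, 0 < C ∧
      ∀ h d e c1m c2m c3m c1p c2p c3p c4 : ℝ, ∀ D E : ℝ × ℝ, ∀ Km Kp : Set (ℝ × ℝ),
        0 < h → h < 1 →
        d ∈ Set.Icc (0:ℝ) 1 → e ∈ Set.Icc (0:ℝ) 1 →
        ((D = ((0:ℝ), d * h) ∧ E = (e * h, (0:ℝ)) ∧ (d, e) ≠ (0, 0) ∧
            Km = {X ∈ sqK h | d * X.1 + e * X.2 ≤ d * e * h} ∧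
            Kp = {X ∈ sqK h | d * e * h ≤ d * X.1 + e * X.2}) ∨
         (D = (d * h, h) ∧ E = (e * h, (0:ℝ)) ∧
            Km = {X ∈ sqK h | X.1 ≤ e * h + (d - e) * X.2} ∧
            Kp = {X ∈ sqK h | e * h + (d - e) * X.2 ≤ X.1})) →
        (∃ n : ℝ × ℝ, unitNormalTo n D E ∧
            bilJump βm βp c1m c2m c3m c1p c2p c3p c4 D E n) →
        ∀ P Q nB : ℝ × ℝ,
          ((P = ((0:ℝ), (0:ℝ)) ∧ Q = ((0:ℝ), h)) ∨
           (P = ((h:ℝ), (0:ℝ)) ∧ Q = (h, h)) ∨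
           (P = ((0:ℝ), (0:ℝ)) ∧ Q = (h, (0:ℝ))) ∨
           (P = ((0:ℝ), h) ∧ Q = (h, h))) →
          nB.1 ^ 2 + nB.2 ^ 2 = 1 →
          nB.1 * (Q.1 - P.1) + nB.2 * (Q.2 - P.2) = 0 →
          Real.sqrt (edgeSqBilN βm βp c2m c3m c2p c3p c4 Km Kp P Q nB)
              ≤ C * Real.sqrt h * (Real.sqrt (h ^ 2))⁻¹ *
                Real.sqrt (energySqBil βm βp c2m c3m c2p c3p c4 Km Kp) := by

  refine ⟨Real.sqrt (2560 * (βm ^ 2 + βp ^ 2)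
      * (2 + 64 * (βm ^ 2 + βp ^ 2) * ((βm⁻¹) ^ 2 + (βp⁻¹) ^ 2)) * (βm⁻¹ + βp⁻¹)),
    Real.sqrt_pos.mpr (by positivity), ?_⟩
  intro h d e c1m c2m c3m c1p c2p c3p c4 D E Km Kp hh hh1 hd he hcfg hjump P Q nB hPQ hnB hnBo
  obtain ⟨n, ⟨hn_unit, hn_orth⟩, hj1, hj2, hj3⟩ := hjump
  clear hnBo
  -- edge data
  have h0m : (0:ℝ) ∈ Set.Icc (0:ℝ) h := ⟨le_refl 0, hh.le⟩
  have hhm : h ∈ Set.Icc (0:ℝ) h := ⟨hh.le, le_refl h⟩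
  have hPQdata : Real.sqrt ((Q.1 - P.1) ^ 2 + (Q.2 - P.2) ^ 2) = h ∧
      P.1 ∈ Set.Icc (0:ℝ) h ∧ P.2 ∈ Set.Icc (0:ℝ) h ∧
      Q.1 ∈ Set.Icc (0:ℝ) h ∧ Q.2 ∈ Set.Icc (0:ℝ) h := by
    rcases hPQ with ⟨rfl, rfl⟩ | ⟨rfl, rfl⟩ | ⟨rfl, rfl⟩ | ⟨rfl, rfl⟩ <;>
      exact ⟨by simp [Real.sqrt_sq hh.le], by first | exact h0m | exact hhm,
        by first | exact h0m | exact hhm, by first | exact h0m | exact hhm,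
        by first | exact h0m | exact hhm⟩
  obtain ⟨hlen, hP1, hP2, hQ1, hQ2⟩ := hPQdata
  rcases hcfg with ⟨hD, hEd, hne, hKm, hKp⟩ | ⟨hD, hEd, hKm, hKp⟩
  · -- Type I
    subst hD hEd hKm hKp
    -- measurability and compactness
    have hKmCl : IsClosed {X ∈ sqK h | d * X.1 + e * X.2 ≤ d * e * h} := by
      have : {X ∈ sqK h | d * X.1 + e * X.2 ≤ d * e * h}
          = sqK h ∩ {X : ℝ × ℝ | d * X.1 + e * X.2 ≤ d * e * h} := rfl
      rw [this]
      exact (isClosed_Icc.prod isClosed_Icc).inter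
        (isClosed_le (by fun_prop) continuous_const)
    have hKpCl : IsClosed {X ∈ sqK h | d * e * h ≤ d * X.1 + e * X.2} := by
      have : {X ∈ sqK h | d * e * h ≤ d * X.1 + e * X.2}
          = sqK h ∩ {X : ℝ × ℝ | d * e * h ≤ d * X.1 + e * X.2} := rfl
      rw [this]
      exact (isClosed_Icc.prod isClosed_Icc).inter
        (isClosed_le continuous_const (by fun_prop))
    have hKsq : IsCompact (sqK h) := isCompact_Icc.prod isCompact_Icc
    have hKmC : IsCompact {X ∈ sqK h | d * X.1 + e * X.2 ≤ d * e * h} :=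
      hKsq.of_isClosed_subset hKmCl fun X hX => hX.1
    have hKpC : IsCompact {X ∈ sqK h | d * e * h ≤ d * X.1 + e * X.2} :=
      hKsq.of_isClosed_subset hKpCl fun X hX => hX.1
    -- algebra from the jump conditions
    have hne' : ¬(d = 0 ∧ e = 0) := by
      intro ⟨h1, h2⟩; exact hne (by rw [h1, h2])
    have hq : 0 < d ^ 2 + e ^ 2 := by
      rcases not_and_or.mp hne' with hd0 | he0
      · have : 0 < d ^ 2 := (sq_nonneg d).lt_of_ne (Ne.symm (pow_ne_zero 2 hd0))
        nlinarith [sq_nonneg e]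
      · have : 0 < e ^ 2 := (sq_nonneg e).lt_of_ne (Ne.symm (pow_ne_zero 2 he0))
        nlinarith [sq_nonneg d]
    rw [flux_scalar βm c2m c3m c4 ((0:ℝ), d * h) (e * h, (0:ℝ)) n,
        flux_scalar βp c2p c3p c4 ((0:ℝ), d * h) (e * h, (0:ℝ)) n] at hj3
    simp only [Prod.fst, Prod.snd] at hj1 hj2 hj3 hn_orth
    -- value jump: E1
    have hE1 : e * c2m - d * c3m = e * c2p - d * c3p := by
      apply mul_left_cancel₀ hh.ne'
      linear_combination hj2 - hj1
    -- flux: cancel the sqrt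
    have hlenpos : (0:ℝ) < Real.sqrt ((e * h - 0) ^ 2 + (0 - d * h) ^ 2) := by
      apply Real.sqrt_pos.mpr
      nlinarith [sq_nonneg (e*h), sq_nonneg (d*h), mul_pos hh hh, mul_pos hq (mul_pos hh hh)]
    have hfl : βm * ((c2m + c4 * (d * h) / 2) * n.1 + (c3m + c4 * (e * h) / 2) * n.2)
        = βp * ((c2p + c4 * (d * h) / 2) * n.1 + (c3p + c4 * (e * h) / 2) * n.2) := by
      have := mul_left_cancel₀ hlenpos.ne' hj3
      linear_combination this
    -- normal facts
    have horth : e * n.1 = d * n.2 := by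
      apply mul_left_cancel₀ hh.ne'
      linear_combination hn_orth
    have hn1 : (d ^ 2 + e ^ 2) * n.1 ^ 2 = d ^ 2 := by
      linear_combination d ^ 2 * hn_unit + (e * n.1 + d * n.2) * horth
    have hn2 : (d ^ 2 + e ^ 2) * n.2 ^ 2 = e ^ 2 := by
      linear_combination e ^ 2 * hn_unit - (e * n.1 + d * n.2) * horth
    have hn12 : (d ^ 2 + e ^ 2) * (n.1 * n.2) = d * e := by
      linear_combination d * e * hn_unit - (d * n.1 - e * n.2) * horth
    have hE2 : βm * (d * c2m + e * c3m) + βm * (c4 * h) * (d ^ 2 + e ^ 2) / 2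
        = βp * (d * c2p + e * c3p) + βp * (c4 * h) * (d ^ 2 + e ^ 2) / 2 := by
      apply mul_left_cancel₀ hq.ne'
      linear_combination ((d ^ 2 + e ^ 2) * (d * n.1 + e * n.2)) * hfl
        - (d * (βm * (c2m + c4 * (d * h) / 2) - βp * (c2p + c4 * (d * h) / 2))) * hn1
        - ((e * (βm * (c2m + c4 * (d * h) / 2) - βp * (c2p + c4 * (d * h) / 2))
            + d * (βm * (c3m + c4 * (e * h) / 2) - βp * (c3p + c4 * (e * h) / 2)))) * hn12
        - (e * (βm * (c3m + c4 * (e * h) / 2) - βp * (c3p + c4 * (e * h) / 2))) * hn2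
    have halg := algI βm βp c2m c3m c2p c3p (c4 * h) d e hq hd.1 hd.2 he.1 he.2 hE2 hE1
    clear hj1 hj2 hj3 hfl hE1 hE2 hn_unit hn_orth horth hn1 hn2 hn12 hlenpos hq hne hne'
    -- rectangle in Kp
    have hrect : Set.Icc (h/2) (h/2 + h/2) ×ˢ Set.Icc (h/2) (h/2 + h/2)
        ⊆ {X ∈ sqK h | d * e * h ≤ d * X.1 + e * X.2} := by
      rintro ⟨x, y⟩ ⟨hx, hy⟩
      simp only [Set.mem_Icc] at hx hy
      refine ⟨⟨⟨?_, ?_⟩, ⟨?_, ?_⟩⟩, ?_⟩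
      · linarith
      · linarith
      · linarith
      · linarith
      · simp only []
        nlinarith [mul_nonneg (mul_nonneg hd.1 (sub_nonneg.mpr he.2)) hh.le,
          mul_nonneg (mul_nonneg he.1 (sub_nonneg.mpr hd.2)) hh.le,
          mul_nonneg hd.1 (by linarith : (0:ℝ) ≤ x - h/2),
          mul_nonneg he.1 (by linarith : (0:ℝ) ≤ y - h/2)]
    exact master βm βp h c2m c3m c2p c3p c4 _ _ P Q nB hβm hβp hh
      hKmCl.measurableSet hKpCl.measurableSet hKmC hKpC hlen hP1 hP2 hQ1 hQ2 hnB
      (h/2) (h/2) (Or.inr rfl) (Or.inr rfl) (Or.inr ⟨hrect, halg⟩)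
  · -- Type II
    subst hD hEd hKm hKp
    have hw : (e - d) ^ 2 ≤ 1 := by nlinarith [hd.1, hd.2, he.1, he.2]
    have hs0 : (0:ℝ) ≤ 1 + (e - d) * (d + e) := by nlinarith [hd.1, hd.2, he.1, he.2]
    have hs2 : 1 + (e - d) * (d + e) ≤ 2 := by nlinarith [hd.1, hd.2, he.1, he.2]
    have hKmCl : IsClosed {X ∈ sqK h | X.1 ≤ e * h + (d - e) * X.2} := by
      have : {X ∈ sqK h | X.1 ≤ e * h + (d - e) * X.2}
          = sqK h ∩ {X : ℝ × ℝ | X.1 ≤ e * h + (d - e) * X.2} := rfl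
      rw [this]
      exact (isClosed_Icc.prod isClosed_Icc).inter
        (isClosed_le (by fun_prop) (by fun_prop))
    have hKpCl : IsClosed {X ∈ sqK h | e * h + (d - e) * X.2 ≤ X.1} := by
      have : {X ∈ sqK h | e * h + (d - e) * X.2 ≤ X.1}
          = sqK h ∩ {X : ℝ × ℝ | e * h + (d - e) * X.2 ≤ X.1} := rfl
      rw [this]
      exact (isClosed_Icc.prod isClosed_Icc).inter
        (isClosed_le (by fun_prop) (by fun_prop))
    have hKsq : IsCompact (sqK h) := isCompact_Icc.prod isCompact_Icc
    have hKmC : IsCompact {X ∈ sqK h | X.1 ≤ e * h + (d - e) * X.2} :=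
      hKsq.of_isClosed_subset hKmCl fun X hX => hX.1
    have hKpC : IsCompact {X ∈ sqK h | e * h + (d - e) * X.2 ≤ X.1} :=
      hKsq.of_isClosed_subset hKpCl fun X hX => hX.1
    rw [flux_scalar βm c2m c3m c4 (d * h, h) (e * h, (0:ℝ)) n,
        flux_scalar βp c2p c3p c4 (d * h, h) (e * h, (0:ℝ)) n] at hj3
    simp only [Prod.fst, Prod.snd] at hj1 hj2 hj3 hn_orth
    -- value jump: T2
    have hT2 : -((e - d) * c2m) + c3m = -((e - d) * c2p) + c3p := by
      apply mul_left_cancel₀ hh.ne'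
      linear_combination hj1 - hj2
    -- flux
    have hlenpos : (0:ℝ) < Real.sqrt ((e * h - d * h) ^ 2 + (0 - h) ^ 2) := by
      apply Real.sqrt_pos.mpr
      nlinarith [sq_nonneg (e*h - d*h), mul_pos hh hh]
    have hfl : βm * ((c2m + c4 * h / 2) * n.1 + (c3m + c4 * ((d + e) * h) / 2) * n.2)
        = βp * ((c2p + c4 * h / 2) * n.1 + (c3p + c4 * ((d + e) * h) / 2) * n.2) := by
      have := mul_left_cancel₀ hlenpos.ne' hj3
      linear_combination this
    have horth : n.2 = (e - d) * n.1 := by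
      apply mul_left_cancel₀ hh.ne'
      linear_combination -hn_orth
    rw [horth] at hfl
    have hunit2 : n.1 ^ 2 * (1 + (e - d) ^ 2) = 1 := by
      rw [horth] at hn_unit
      linear_combination hn_unit
    have hE2 : βm * ((c2m + c4 * h / 2) + (e - d) * (c3m + c4 * ((d + e) * h) / 2))
        = βp * ((c2p + c4 * h / 2) + (e - d) * (c3p + c4 * ((d + e) * h) / 2)) := by
      linear_combination ((1 + (e - d) ^ 2) * n.1) * hfl
        + (βp * ((c2p + c4 * h / 2) + (e - d) * (c3p + c4 * ((d + e) * h) / 2))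
           - βm * ((c2m + c4 * h / 2) + (e - d) * (c3m + c4 * ((d + e) * h) / 2))) * hunit2
    have hAm : βm * (c2m + (e - d) * c3m)
        = βp * (c2p + (e - d) * c3p) + (βp - βm) * ((c4 * h) / 2) * (1 + (e - d) * (d + e)) := by
      linear_combination hE2
    have hBm : -((e - d) * c2m) + c3m = -((e - d) * c2p) + c3p := hT2
    clear hj1 hj2 hj3 hfl hn_unit hn_orth horth hunit2 hlenpos hT2
    rcases le_total (d + e) 1 with hde | hde
    · -- big side is Kp
      have halg := algII βm βp c2m c3m c2p c3p (c4 * h) (e - d) (1 + (e - d) * (d + e))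
        hw hs0 hs2 hAm hBm
      clear hE2 hAm hBm
      rcases le_total d e with hde2 | hde2
      · -- rect [h/2,h] x [h/2,h]
        have hrect : Set.Icc (h/2) (h/2 + h/2) ×ˢ Set.Icc (h/2) (h/2 + h/2)
            ⊆ {X ∈ sqK h | e * h + (d - e) * X.2 ≤ X.1} := by
          rintro ⟨x, y⟩ ⟨hx, hy⟩
          simp only [Set.mem_Icc] at hx hy
          refine ⟨⟨⟨?_, ?_⟩, ⟨?_, ?_⟩⟩, ?_⟩
          · linarith
          · linarith
          · linarith
          · linarith
          · simp only []
            nlinarith [mul_nonneg (sub_nonneg.mpr hde2) (by linarith : (0:ℝ) ≤ y - h/2)]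
        exact master βm βp h c2m c3m c2p c3p c4 _ _ P Q nB hβm hβp hh
          hKmCl.measurableSet hKpCl.measurableSet hKmC hKpC hlen hP1 hP2 hQ1 hQ2 hnB
          (h/2) (h/2) (Or.inr rfl) (Or.inr rfl) (Or.inr ⟨hrect, halg⟩)
      · -- rect [h/2,h] x [0,h/2]
        have hrect : Set.Icc (h/2) (h/2 + h/2) ×ˢ Set.Icc 0 (0 + h / 2)
            ⊆ {X ∈ sqK h | e * h + (d - e) * X.2 ≤ X.1} := by
          rintro ⟨x, y⟩ ⟨hx, hy⟩
          simp only [Set.mem_Icc] at hx hy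
          refine ⟨⟨⟨?_, ?_⟩, ⟨?_, ?_⟩⟩, ?_⟩
          · linarith
          · linarith
          · linarith
          · linarith
          · simp only []
            nlinarith [mul_nonneg (sub_nonneg.mpr hde2) (by linarith : (0:ℝ) ≤ h/2 - y)]
        exact master βm βp h c2m c3m c2p c3p c4 _ _ P Q nB hβm hβp hh
          hKmCl.measurableSet hKpCl.measurableSet hKmC hKpC hlen hP1 hP2 hQ1 hQ2 hnB
          (h/2) 0 (Or.inr rfl) (Or.inl rfl) (Or.inr ⟨hrect, halg⟩)
    · -- big side is Km
      have hAp : βp * (c2p + (e - d) * c3p)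
          = βm * (c2m + (e - d) * c3m) + (βm - βp) * ((c4 * h) / 2) * (1 + (e - d) * (d + e)) := by
        linear_combination -hE2
      have halg := algII βp βm c2p c3p c2m c3m (c4 * h) (e - d) (1 + (e - d) * (d + e))
        hw hs0 hs2 hAp hBm.symm
      have halg' : βp ^ 2 * (c2p ^ 2 + c3p ^ 2)
          ≤ 64 * (βm ^ 2 + βp ^ 2) * (c2m ^ 2 + c3m ^ 2 + (c4 * h) ^ 2) := by
        calc βp ^ 2 * (c2p ^ 2 + c3p ^ 2)
            ≤ 64 * (βp ^ 2 + βm ^ 2) * (c2m ^ 2 + c3m ^ 2 + (c4 * h) ^ 2) := halg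
          _ = 64 * (βm ^ 2 + βp ^ 2) * (c2m ^ 2 + c3m ^ 2 + (c4 * h) ^ 2) := by ring
      clear hE2 hAm hAp hBm halg
      rcases le_total d e with hde2 | hde2
      · -- rect [0,h/2] x [0,h/2]
        have hrect : Set.Icc 0 (0 + h / 2) ×ˢ Set.Icc 0 (0 + h / 2)
            ⊆ {X ∈ sqK h | X.1 ≤ e * h + (d - e) * X.2} := by
          rintro ⟨x, y⟩ ⟨hx, hy⟩
          simp only [Set.mem_Icc] at hx hy
          refine ⟨⟨⟨?_, ?_⟩, ⟨?_, ?_⟩⟩, ?_⟩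
          · linarith
          · linarith
          · linarith
          · linarith
          · simp only []
            nlinarith [mul_nonneg (sub_nonneg.mpr hde2) (by linarith : (0:ℝ) ≤ h/2 - y)]
        exact master βm βp h c2m c3m c2p c3p c4 _ _ P Q nB hβm hβp hh
          hKmCl.measurableSet hKpCl.measurableSet hKmC hKpC hlen hP1 hP2 hQ1 hQ2 hnB
          0 0 (Or.inl rfl) (Or.inl rfl) (Or.inl ⟨hrect, halg'⟩)
      · -- rect [0,h/2] x [h/2,h]
        have hrect : Set.Icc 0 (0 + h / 2) ×ˢ Set.Icc (h/2) (h/2 + h/2)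
            ⊆ {X ∈ sqK h | X.1 ≤ e * h + (d - e) * X.2} := by
          rintro ⟨x, y⟩ ⟨hx, hy⟩
          simp only [Set.mem_Icc] at hx hy
          refine ⟨⟨⟨?_, ?_⟩, ⟨?_, ?_⟩⟩, ?_⟩
          · linarith
          · linarith
          · linarith
          · linarith
          · simp only []
            nlinarith [mul_nonneg (sub_nonneg.mpr hde2) (by linarith : (0:ℝ) ≤ y - h/2)]
        exact master βm βp h c2m c3m c2p c3p c4 _ _ P Q nB hβm hβp hh
          hKmCl.measurableSet hKpCl.measurableSet hKmC hKpC hlen hP1 hP2 hQ1 hQ2 hnB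
          0 (h/2) (Or.inl rfl) (Or.inr rfl) (Or.inl ⟨hrect, halg'⟩)
end

section
/- There exists an absolute constant C > 0 such that for every h > 0, every d with 0 ≤ d < h, and every Lebesgue-measurable function g : [0,h] → ℝ, the iterated integral bound ∫₀^d ∫₀^{(d−y)/(h−y)} (1−t)² (h−y)² g(y + t(h−y))² dt dy ≤ C h² ∫₀^d g(z)² dz holds (with both sides possibly infinite). -/
open MeasureTheory ENNReal

lemma lintegral_affine (a c : ℝ) (hc : c ≠ 0) (f : ℝ → ℝ≥0∞) (s : Set ℝ) :
    ∫⁻ t in s, f (a + c * t) =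
      ENNReal.ofReal |c⁻¹| * ∫⁻ z in (fun t => a + c * t) '' s, f z := by
  set φ : ℝ → ℝ := fun t => a + c * t with hφ
  have hcomp : φ = (fun x => a + x) ∘ (fun x => c * x) := by ext t; simp [hφ]
  have hemb : MeasurableEmbedding φ := by
    rw [hcomp]
    exact (MeasurableEquiv.trans
      (Homeomorph.mulLeft₀ c hc).toMeasurableEquiv
      (Homeomorph.addLeft a).toMeasurableEquiv).measurableEmbedding
  have hmap : Measure.map φ volume = (ENNReal.ofReal |c⁻¹|) • volume := by
    rw [hcomp, ← Measure.map_map (measurable_const_add a) (measurable_const_mul c),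
      Real.map_volume_mul_left hc, Measure.map_smul,
      MeasureTheory.map_add_left_eq_self volume a]
  have key : Measure.map φ (volume.restrict s) =
      (ENNReal.ofReal |c⁻¹|) • (volume.restrict (φ '' s)) := by
    have := hemb.restrict_map (volume : Measure ℝ) (φ '' s)
    rw [Set.preimage_image_eq s hemb.injective] at this
    rw [← this, hmap, Measure.restrict_smul]
  calc ∫⁻ t in s, f (φ t) = ∫⁻ z, f z ∂(Measure.map φ (volume.restrict s)) :=
        (hemb.lintegral_map f).symm
    _ = ENNReal.ofReal |c⁻¹| * ∫⁻ z in φ '' s, f z := by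
        rw [key, lintegral_smul_measure, smul_eq_mul]

/-- there is an absolute constant `C > 0` such that for every `h > 0`,
`0 ≤ d < h`, and every Lebesgue-measurable `g : [0,h] → ℝ`,
`∫₀^d ∫₀^{(d-y)/(h-y)} (1-t)²(h-y)² g(y+t(h-y))² dt dy ≤ C h² ∫₀^d g(z)² dz`. -/
theorem stmt12 :
    ∃ C : ℝ, 0 < C ∧
      ∀ h d : ℝ, 0 < h → 0 ≤ d → d < h →
        ∀ g : ℝ → ℝ, Measurable g →
          (∫⁻ y in Set.Icc (0:ℝ) d, ∫⁻ t in Set.Icc (0:ℝ) ((d - y) / (h - y)),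
              ENNReal.ofReal ((1 - t) ^ 2 * (h - y) ^ 2 * (g (y + t * (h - y))) ^ 2))
            ≤ ENNReal.ofReal (C * h ^ 2) *
                ∫⁻ z in Set.Icc (0:ℝ) d, ENNReal.ofReal ((g z) ^ 2) := by
  refine ⟨1, one_pos, fun h d hh hd0 hdh g hg => ?_⟩
  set I : ℝ≥0∞ := ∫⁻ z in Set.Icc (0:ℝ) d, ENNReal.ofReal ((g z) ^ 2) with hI
  have inner_bound : ∀ y ∈ Set.Icc (0:ℝ) d,
      (∫⁻ t in Set.Icc (0:ℝ) ((d - y) / (h - y)),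
        ENNReal.ofReal ((1 - t) ^ 2 * (h - y) ^ 2 * (g (y + t * (h - y))) ^ 2))
      ≤ ENNReal.ofReal h * I := by
    intro y hy
    obtain ⟨hy0, hyd⟩ := hy
    have hc : (0:ℝ) < h - y := by linarith
    set c : ℝ := h - y with hcdef
    set T : ℝ := (d - y) / c with hT
    have hT1 : T ≤ 1 := by
      rw [hT, div_le_one hc]; linarith
    have step1 : (∫⁻ t in Set.Icc (0:ℝ) T,
          ENNReal.ofReal ((1 - t) ^ 2 * c ^ 2 * (g (y + t * c)) ^ 2))
        ≤ ∫⁻ t in Set.Icc (0:ℝ) T,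
            (fun z => ENNReal.ofReal (c ^ 2 * (g z) ^ 2)) (y + c * t) := by
      apply setLIntegral_mono
      · exact (measurable_const.mul
          ((hg.comp ((measurable_id.const_mul c).const_add y)).pow_const 2)).ennreal_ofReal
      · intro t ht
        apply ENNReal.ofReal_le_ofReal
        rw [mul_comm t c]
        have h1t : (1 - t) ^ 2 ≤ 1 := by
          have ht0 : 0 ≤ t := ht.1
          have ht1 : t ≤ 1 := le_trans ht.2 hT1
          nlinarith
        nlinarith [sq_nonneg (g (y + c * t)), sq_nonneg c, mul_nonneg (sq_nonneg c) (sq_nonneg (g (y + c * t)))]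
    have step2 : (∫⁻ t in Set.Icc (0:ℝ) T,
          (fun z => ENNReal.ofReal (c ^ 2 * (g z) ^ 2)) (y + c * t))
        = ENNReal.ofReal |c⁻¹| *
            ∫⁻ z in (fun t => y + c * t) '' Set.Icc (0:ℝ) T,
              ENNReal.ofReal (c ^ 2 * (g z) ^ 2) := by
      exact lintegral_affine y c hc.ne' (fun z => ENNReal.ofReal (c ^ 2 * (g z) ^ 2)) (Set.Icc (0:ℝ) T)
    have himg : (fun t => y + c * t) '' Set.Icc (0:ℝ) T ⊆ Set.Icc (0:ℝ) d := by
      rintro _ ⟨t, ⟨ht0, htT⟩, rfl⟩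
      simp only [Set.mem_Icc]
      constructor
      · have : 0 ≤ c * t := mul_nonneg hc.le ht0
        linarith
      · have : c * t ≤ c * T := mul_le_mul_of_nonneg_left htT hc.le
        have hcT : c * T = d - y := by
          rw [hT]; field_simp
        linarith
    have step3 : (∫⁻ z in (fun t => y + c * t) '' Set.Icc (0:ℝ) T,
          ENNReal.ofReal (c ^ 2 * (g z) ^ 2))
        ≤ ∫⁻ z in Set.Icc (0:ℝ) d, ENNReal.ofReal (c ^ 2 * (g z) ^ 2) :=
      lintegral_mono_set himg
    have step4 : (∫⁻ z in Set.Icc (0:ℝ) d, ENNReal.ofReal (c ^ 2 * (g z) ^ 2))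
        = ENNReal.ofReal (c ^ 2) * I := by
      rw [hI, ← lintegral_const_mul' _ _ ENNReal.ofReal_ne_top]
      congr 1; ext z
      rw [← ENNReal.ofReal_mul (sq_nonneg c)]
    calc (∫⁻ t in Set.Icc (0:ℝ) T,
          ENNReal.ofReal ((1 - t) ^ 2 * c ^ 2 * (g (y + t * c)) ^ 2))
        ≤ ENNReal.ofReal |c⁻¹| *
            ∫⁻ z in (fun t => y + c * t) '' Set.Icc (0:ℝ) T,
              ENNReal.ofReal (c ^ 2 * (g z) ^ 2) := by rw [← step2]; exact step1
      _ ≤ ENNReal.ofReal |c⁻¹| * (ENNReal.ofReal (c ^ 2) * I) := by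
          rw [step4] at step3; exact mul_le_mul_right step3 _
      _ = ENNReal.ofReal (|c⁻¹| * c ^ 2) * I := by
          rw [ENNReal.ofReal_mul (abs_nonneg _), mul_assoc]
      _ ≤ ENNReal.ofReal h * I := by
          apply mul_le_mul_left
          apply ENNReal.ofReal_le_ofReal
          rw [abs_of_pos (inv_pos.mpr hc)]
          have : c⁻¹ * c ^ 2 = c := by field_simp
          rw [this]; linarith
  calc (∫⁻ y in Set.Icc (0:ℝ) d, ∫⁻ t in Set.Icc (0:ℝ) ((d - y) / (h - y)),
          ENNReal.ofReal ((1 - t) ^ 2 * (h - y) ^ 2 * (g (y + t * (h - y))) ^ 2))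
      ≤ ∫⁻ _ in Set.Icc (0:ℝ) d, ENNReal.ofReal h * I :=
        setLIntegral_mono measurable_const inner_bound
    _ = ENNReal.ofReal d * (ENNReal.ofReal h * I) := by
        rw [setLIntegral_const, Real.volume_Icc, sub_zero, mul_comm]
    _ ≤ ENNReal.ofReal (1 * h ^ 2) * I := by
        rw [← mul_assoc, ← ENNReal.ofReal_mul hd0]
        apply mul_le_mul_left
        apply ENNReal.ofReal_le_ofReal
        nlinarith
end

section
/- There exists an absolute constant C > 0 such that for every h > 0, every d with 0 ≤ d < h, and every Lebesgue-measurable function g : [0,h] → ℝ, the iterated integral bound ∫₀^d ∫_{(d−y)/(h−y)}^{1} (1−t)² (h−y)² g(y + t(h−y))² dt dy ≤ C h² ∫_d^h g(z)² dz holds (with both sides possibly infinite). -/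
open MeasureTheory
open scoped ENNReal

lemma aux_change (F : ℝ → ℝ≥0∞) (hF : Measurable F) (c b : ℝ) (hb : 0 < b) (a : ℝ) :
    ∫⁻ t in Set.Icc a 1, F (c + t * b) =
      (ENNReal.ofReal b)⁻¹ * ∫⁻ z in Set.Icc (c + a * b) (c + b), F z := by
  have hb' : b ≠ 0 := ne_of_gt hb
  have hmeas : Measurable (fun t : ℝ => c + t * b) := by measurability
  have hmap : Measure.map (fun t : ℝ => c + t * b) volume
      = ENNReal.ofReal b⁻¹ • volume := by
    have : (fun t : ℝ => c + t * b) = (fun x : ℝ => x + c) ∘ (fun t : ℝ => t * b) := by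
      ext t; simp [add_comm]
    rw [this, ← Measure.map_map (measurable_add_const c) (measurable_mul_const b),
      Real.map_volume_mul_right hb', Measure.map_smul, map_add_right_eq_self,
      abs_of_pos (inv_pos.2 hb)]
  have hpre : (fun t : ℝ => c + t * b) ⁻¹' Set.Icc (c + a * b) (c + b) = Set.Icc a 1 := by
    ext t
    simp only [Set.mem_preimage, Set.mem_Icc]
    constructor
    · rintro ⟨h1, h2⟩
      constructor
      · have := sub_nonneg.2 h1
        nlinarith
      · nlinarith
    · rintro ⟨h1, h2⟩
      constructor <;> nlinarith
  have := setLIntegral_map (μ := volume) (g := fun t : ℝ => c + t * b)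
    (s := Set.Icc (c + a * b) (c + b)) measurableSet_Icc hF hmeas
  rw [hpre] at this
  rw [← this, hmap, Measure.restrict_smul, lintegral_smul_measure,
    ENNReal.ofReal_inv_of_pos hb, smul_eq_mul]

/-- there is an absolute constant `C > 0` such that for every `h > 0`,
`0 ≤ d < h`, and every Lebesgue-measurable `g : [0,h] → ℝ`,
`∫₀^d ∫_{(d-y)/(h-y)}^1 (1-t)²(h-y)² g(y+t(h-y))² dt dy ≤ C h² ∫_d^h g(z)² dz`. -/
theorem stmt13 :
    ∃ C : ℝ, 0 < C ∧
      ∀ h d : ℝ, 0 < h → 0 ≤ d → d < h →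
        ∀ g : ℝ → ℝ, Measurable g →
          (∫⁻ y in Set.Icc (0:ℝ) d, ∫⁻ t in Set.Icc ((d - y) / (h - y)) 1,
              ENNReal.ofReal ((1 - t) ^ 2 * (h - y) ^ 2 * (g (y + t * (h - y))) ^ 2))
            ≤ ENNReal.ofReal (C * h ^ 2) *
                ∫⁻ z in Set.Icc d h, ENNReal.ofReal ((g z) ^ 2) := by
  refine ⟨1, one_pos, ?_⟩
  intro h d hh hd0 hdh g hg
  set J := ∫⁻ z in Set.Icc d h, ENNReal.ofReal ((g z) ^ 2) with hJ
  set F : ℝ → ℝ≥0∞ := fun z => ENNReal.ofReal ((g z) ^ 2) with hF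
  have hFmeas : Measurable F := by
    apply Measurable.ennreal_ofReal; exact (hg.pow_const 2)
  have key : ∀ y ∈ Set.Icc (0:ℝ) d,
      (∫⁻ t in Set.Icc ((d - y) / (h - y)) 1,
          ENNReal.ofReal ((1 - t) ^ 2 * (h - y) ^ 2 * (g (y + t * (h - y))) ^ 2))
        ≤ ENNReal.ofReal h * J := by
    intro y hy
    obtain ⟨hy0, hyd⟩ := hy
    have hyh : y < h := lt_of_le_of_lt hyd hdh
    have hb : 0 < h - y := sub_pos.2 hyh
    set a := (d - y) / (h - y) with ha
    have ha0 : 0 ≤ a := div_nonneg (by linarith) hb.le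
    have ha1 : a ≤ 1 := (div_le_one hb).2 (by linarith)
    have step1 : (∫⁻ t in Set.Icc a 1,
        ENNReal.ofReal ((1 - t) ^ 2 * (h - y) ^ 2 * (g (y + t * (h - y))) ^ 2))
        ≤ ∫⁻ t in Set.Icc a 1,
            ENNReal.ofReal ((h - y) ^ 2) * F (y + t * (h - y)) := by
      apply setLIntegral_mono
      · exact (measurable_const.mul (hFmeas.comp (by measurability)))
      · intro t ht
        obtain ⟨ht1, ht2⟩ := ht
        rw [hF, ← ENNReal.ofReal_mul (by positivity)]
        apply ENNReal.ofReal_le_ofReal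
        have h1t : 0 ≤ 1 - t := by linarith
        have h2 : (1 - t) ^ 2 ≤ 1 := by nlinarith
        calc (1 - t) ^ 2 * (h - y) ^ 2 * (g (y + t * (h - y))) ^ 2
            = (1 - t) ^ 2 * ((h - y) ^ 2 * (g (y + t * (h - y))) ^ 2) := by ring
          _ ≤ 1 * ((h - y) ^ 2 * (g (y + t * (h - y))) ^ 2) :=
              mul_le_mul_of_nonneg_right h2 (by positivity)
          _ = (h - y) ^ 2 * (g (y + t * (h - y))) ^ 2 := by ring
    have step2 : (∫⁻ t in Set.Icc a 1,
        ENNReal.ofReal ((h - y) ^ 2) * F (y + t * (h - y)))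
        = ENNReal.ofReal ((h - y) ^ 2) *
            ((ENNReal.ofReal (h - y))⁻¹ * ∫⁻ z in Set.Icc d h, F z) := by
      have hφ : Measurable fun t : ℝ => F (y + t * (h - y)) :=
        hFmeas.comp (measurable_const.add (measurable_id.mul_const _))
      rw [lintegral_const_mul _ hφ]
      congr 1
      have hend1 : y + a * (h - y) = d := by
        rw [ha]; field_simp; ring
      have hend2 : y + (h - y) = h := by ring
      have := aux_change F hFmeas y (h - y) hb a
      rw [hend1, hend2] at this
      exact this
    have step3 : ENNReal.ofReal ((h - y) ^ 2) *
        ((ENNReal.ofReal (h - y))⁻¹ * J) ≤ ENNReal.ofReal h * J := by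
      have hne : ENNReal.ofReal (h - y) ≠ 0 := by
        simp [ENNReal.ofReal_eq_zero]; linarith
      have hnt : ENNReal.ofReal (h - y) ≠ ⊤ := ENNReal.ofReal_ne_top
      have : ENNReal.ofReal ((h - y) ^ 2) * (ENNReal.ofReal (h - y))⁻¹
          = ENNReal.ofReal (h - y) := by
        rw [sq, ENNReal.ofReal_mul hb.le, mul_assoc, ENNReal.mul_inv_cancel hne hnt, mul_one]
      rw [← mul_assoc, this]
      exact mul_le_mul_left (ENNReal.ofReal_le_ofReal (by linarith)) J
    calc (∫⁻ t in Set.Icc a 1,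
        ENNReal.ofReal ((1 - t) ^ 2 * (h - y) ^ 2 * (g (y + t * (h - y))) ^ 2))
        ≤ _ := step1
      _ = _ := step2
      _ ≤ ENNReal.ofReal h * J := step3
  calc (∫⁻ y in Set.Icc (0:ℝ) d, ∫⁻ t in Set.Icc ((d - y) / (h - y)) 1,
          ENNReal.ofReal ((1 - t) ^ 2 * (h - y) ^ 2 * (g (y + t * (h - y))) ^ 2))
      ≤ ∫⁻ _ in Set.Icc (0:ℝ) d, ENNReal.ofReal h * J :=
        setLIntegral_mono measurable_const key
    _ = ENNReal.ofReal d * (ENNReal.ofReal h * J) := by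
        rw [setLIntegral_const, Real.volume_Icc]
        rw [mul_comm]
        congr 2
        simp
    _ ≤ ENNReal.ofReal (1 * h ^ 2) * J := by
        rw [← mul_assoc, ← ENNReal.ofReal_mul hd0]
        exact mul_le_mul_left (ENNReal.ofReal_le_ofReal (by nlinarith)) J
end
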